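/- Let H be a real Hilbert space and let u : ℝ^p → H be twice continuously differentiable with L-Lipschitz first derivative (L > 0). Let w ∈ ℝ^p satisfy ‖Du(w)z‖ ≥ λ‖z‖ for all z ∈ ℝ^p with λ > 0, and fix v ∈ ℝ^p. For t in a neighborhood of 0 set A(t) := Du(w + tv) and P(t) := A(t)(A(t)*A(t))⁻¹A(t)* (well-defined for small t since the Gram operators remain invertible). Then t ↦ P(t) is differentiable at t = 0 in operator norm and ‖P'(0)‖_op ≤ (2L/λ)‖v‖. -/

import Mathlib

open ContinuousLinearMap
open scoped RealInnerProductSpace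

set_option maxHeartbeats 1000000
/-- Lemma 3.1 (differential bound of the projector): the orthogonal projector onto the
range of the Jacobian along a parameter line is differentiable at `t = 0` with derivative
bounded in operator norm by `(2L/λ)‖v‖`. -/
theorem stmt_3 {p : ℕ} {H : Type*} [NormedAddCommGroup H] [InnerProductSpace ℝ H]
    [CompleteSpace H]
    (u : EuclideanSpace ℝ (Fin p) → H)
    (Du : EuclideanSpace ℝ (Fin p) → (EuclideanSpace ℝ (Fin p) →L[ℝ] H))
    (L lam : ℝ) (hL : 0 < L) (hlam : 0 < lam)
    (hC2 : ContDiff ℝ 2 u)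
    (hDu : ∀ x, HasFDerivAt u (Du x) x)
    (hLip : ∀ w₁ w₂, ‖Du w₁ - Du w₂‖ ≤ L * ‖w₁ - w₂‖)
    (w v : EuclideanSpace ℝ (Fin p))
    (hlb : ∀ z, lam * ‖z‖ ≤ ‖Du w z‖) :
    ∃ P' : H →L[ℝ] H,
      HasDerivAt (fun t : ℝ =>
        (Du (w + t • v)).comp
          ((ContinuousLinearMap.inverse
              ((ContinuousLinearMap.adjoint (Du (w + t • v))).comp (Du (w + t • v)))).comp
            (ContinuousLinearMap.adjoint (Du (w + t • v)))))
        P' 0 ∧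
      ‖P'‖ ≤ 2 * L / lam * ‖v‖ := by
  classical
  -- derivative of t ↦ Du (w + t • v)
  have hDu_eq : Du = fderiv ℝ u := funext fun x => ((hDu x).fderiv).symm
  have hC1 : ContDiff ℝ 1 (fderiv ℝ u) := hC2.fderiv_right (by norm_num)
  have hDudiff : DifferentiableAt ℝ Du w := by
    rw [hDu_eq]; exact (hC1.differentiable one_ne_zero).differentiableAt
  set B : EuclideanSpace ℝ (Fin p) →L[ℝ] H := fderiv ℝ Du w v with hBdef
  have hzero : w + (0 : ℝ) • v = w := by simp
  have hline : HasDerivAt (fun t : ℝ => w + t • v) v 0 := by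
    simpa using ((hasDerivAt_id (0 : ℝ)).smul_const v).const_add w
  have ha : HasDerivAt (fun t : ℝ => Du (w + t • v)) B 0 := by
    have hl : HasFDerivAt Du (fderiv ℝ Du w) (w + (0 : ℝ) • v) := by
      rw [hzero]; exact hDudiff.hasFDerivAt
    exact hl.comp_hasDerivAt 0 hline
  -- norm bound ‖B‖ ≤ L * ‖v‖
  have hLv : (0 : ℝ) ≤ L * ‖v‖ := by positivity
  have hBnorm : ‖B‖ ≤ L * ‖v‖ := by
    have hlipA : LipschitzWith (Real.toNNReal (L * ‖v‖)) (fun t : ℝ => Du (w + t • v)) := by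
      refine LipschitzWith.of_dist_le_mul fun t₁ t₂ => ?_
      rw [dist_eq_norm, dist_eq_norm]
      calc ‖Du (w + t₁ • v) - Du (w + t₂ • v)‖ ≤ L * ‖(w + t₁ • v) - (w + t₂ • v)‖ :=
            hLip _ _
        _ = Real.toNNReal (L * ‖v‖) * ‖t₁ - t₂‖ := by
            rw [add_sub_add_left_eq_sub, ← sub_smul, norm_smul,
              Real.coe_toNNReal _ hLv]
            simp [Real.norm_eq_abs]; ring
    have h2 := (hasDerivAt_iff_hasFDerivAt.mp ha).le_of_lipschitz hlipA
    rw [norm_toSpanSingleton] at h2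
    rwa [Real.coe_toNNReal _ hLv] at h2
  -- adjoint as a continuous linear map, to differentiate t ↦ (Du (w+t•v))†
  let adjL : (EuclideanSpace ℝ (Fin p) →L[ℝ] H) →ₗ[ℝ] (H →L[ℝ] EuclideanSpace ℝ (Fin p)) :=
    { toFun := ContinuousLinearMap.adjoint
      map_add' := fun S T => map_add _ S T
      map_smul' := fun c T => by
        simpa using LinearIsometryEquiv.map_smulₛₗ (ContinuousLinearMap.adjoint) c T }
  let adjCLM : (EuclideanSpace ℝ (Fin p) →L[ℝ] H) →L[ℝ] (H →L[ℝ] EuclideanSpace ℝ (Fin p)) :=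
    LinearMap.mkContinuous adjL 1 fun T => by
      rw [one_mul]
      exact (LinearIsometryEquiv.norm_map (ContinuousLinearMap.adjoint) T).le
  have hb : HasDerivAt (fun t : ℝ => ContinuousLinearMap.adjoint (Du (w + t • v)))
      (ContinuousLinearMap.adjoint B) 0 := by
    have := adjCLM.hasFDerivAt.comp_hasDerivAt 0 ha
    exact this
  -- derivative of the Gram map
  have hg : HasDerivAt
      (fun t : ℝ => (ContinuousLinearMap.adjoint (Du (w + t • v))).comp (Du (w + t • v)))
      ((ContinuousLinearMap.adjoint B).comp (Du w)
        + (ContinuousLinearMap.adjoint (Du w)).comp B) 0 := by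
    have := hb.clm_comp ha
    rwa [hzero] at this
  -- the Gram operator at 0 is a unit
  have hginj : Function.Injective
      (((ContinuousLinearMap.adjoint (Du w)).comp (Du w) :
        EuclideanSpace ℝ (Fin p) →ₗ[ℝ] EuclideanSpace ℝ (Fin p))) := by
    rw [injective_iff_map_eq_zero]
    intro z hz
    have h1 : ⟪(Du w) z, (Du w) z⟫ = 0 := by
      have h2 := ContinuousLinearMap.adjoint_inner_left (Du w) z ((Du w) z)
      have hz' : (ContinuousLinearMap.adjoint (Du w)) ((Du w) z) = 0 := hz
      rw [hz'] at h2
      simp at h2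
      rw [real_inner_self_eq_norm_sq]; exact h2.symm
    have h3 : (Du w) z = 0 := by
      rwa [inner_self_eq_zero] at h1
    have h4 := hlb z
    rw [h3, norm_zero] at h4
    by_contra hne
    have hpos : 0 < ‖z‖ := norm_pos_iff.mpr hne
    nlinarith
  have hgbij : Function.Bijective
      (((ContinuousLinearMap.adjoint (Du w)).comp (Du w) :
        EuclideanSpace ℝ (Fin p) →ₗ[ℝ] EuclideanSpace ℝ (Fin p))) :=
    ⟨hginj, LinearMap.injective_iff_surjective.mp hginj⟩
  let ce : EuclideanSpace ℝ (Fin p) ≃L[ℝ] EuclideanSpace ℝ (Fin p) :=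
    (LinearEquiv.ofBijective _ hgbij).toContinuousLinearEquiv
  let gu : (EuclideanSpace ℝ (Fin p) →L[ℝ] EuclideanSpace ℝ (Fin p))ˣ :=
    (ContinuousLinearEquiv.unitsEquiv ℝ _).symm ce
  have hgu : (gu : EuclideanSpace ℝ (Fin p) →L[ℝ] EuclideanSpace ℝ (Fin p))
      = (ContinuousLinearMap.adjoint (Du w)).comp (Du w) := by
    ext x; rfl
  have hQg1 : ((gu⁻¹ : _ˣ) : EuclideanSpace ℝ (Fin p) →L[ℝ] EuclideanSpace ℝ (Fin p))
      * ((ContinuousLinearMap.adjoint (Du w)).comp (Du w)) = 1 := by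
    rw [← hgu]; exact gu.inv_mul
  have hQg2 : ((ContinuousLinearMap.adjoint (Du w)).comp (Du w))
      * ((gu⁻¹ : _ˣ) : EuclideanSpace ℝ (Fin p) →L[ℝ] EuclideanSpace ℝ (Fin p)) = 1 := by
    rw [← hgu]; exact gu.mul_inv
  -- derivative of the inverse Gram map
  have hpt := hasFDerivAt_ringInverse (𝕜 := ℝ) gu
  rw [hgu, ← hzero] at hpt
  have hgi := hpt.comp_hasDerivAt 0 hg
  simp only [ContinuousLinearMap.ringInverse_eq_inverse] at hgi
  have hP := ha.clm_comp (hgi.clm_comp hb)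
  simp only [Function.comp_apply, hzero] at hP
  have hQval : ContinuousLinearMap.inverse
      ((ContinuousLinearMap.adjoint (Du w)).comp (Du w))
      = ((gu⁻¹ : _ˣ) : EuclideanSpace ℝ (Fin p) →L[ℝ] EuclideanSpace ℝ (Fin p)) := by
    rw [← ContinuousLinearMap.ringInverse_eq_inverse, ← hgu, Ring.inverse_unit]
  simp only [hQval] at hP
  set Q : EuclideanSpace ℝ (Fin p) →L[ℝ] EuclideanSpace ℝ (Fin p) :=
    ((gu⁻¹ : _ˣ) : EuclideanSpace ℝ (Fin p) →L[ℝ] EuclideanSpace ℝ (Fin p)) with hQdef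
  set A : EuclideanSpace ℝ (Fin p) →L[ℝ] H := Du w with hAdef
  set M : H →L[ℝ] EuclideanSpace ℝ (Fin p) := Q.comp (ContinuousLinearMap.adjoint A)
    with hMdef
  refine ⟨((1 : H →L[ℝ] H) - A.comp M).comp (B.comp M)
      + (A.comp (Q.comp (ContinuousLinearMap.adjoint B))).comp
          ((1 : H →L[ℝ] H) - A.comp M), ?_, ?_⟩
  · convert hP using 1
    ext x
    simp only [hMdef, ContinuousLinearMap.add_apply, ContinuousLinearMap.comp_apply,
      ContinuousLinearMap.sub_apply, ContinuousLinearMap.one_apply,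
      ContinuousLinearMap.neg_apply, ContinuousLinearMap.mulLeftRight_apply,
      ContinuousLinearMap.mul_apply, map_add, map_sub, map_neg]
    abel
  · -- norm bound
    have hQgapp : ∀ z, Q (((ContinuousLinearMap.adjoint A).comp A) z) = z := by
      intro z
      have := congrArg
        (fun T : EuclideanSpace ℝ (Fin p) →L[ℝ] EuclideanSpace ℝ (Fin p) => T z) hQg1
      simpa [ContinuousLinearMap.mul_apply] using this
    have hgQapp : ∀ z, ((ContinuousLinearMap.adjoint A).comp A) (Q z) = z := by
      intro z
      have := congrArg
        (fun T : EuclideanSpace ℝ (Fin p) →L[ℝ] EuclideanSpace ℝ (Fin p) => T z) hQg2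
      simpa [ContinuousLinearMap.mul_apply] using this
    have hMbd : ∀ y : H, lam * ‖M y‖ ≤ ‖y‖ := by
      intro y
      have h1 : (ContinuousLinearMap.adjoint A) (A (M y)) = (ContinuousLinearMap.adjoint A) y := by
        have := hgQapp ((ContinuousLinearMap.adjoint A) y)
        simpa [hMdef, ContinuousLinearMap.comp_apply] using this
      have h2 : ⟪A (M y), A (M y)⟫ = ⟪y, A (M y)⟫ := by
        calc ⟪A (M y), A (M y)⟫
            = ⟪(ContinuousLinearMap.adjoint A) (A (M y)), M y⟫ :=
              (ContinuousLinearMap.adjoint_inner_left A (M y) (A (M y))).symm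
          _ = ⟪(ContinuousLinearMap.adjoint A) y, M y⟫ := by rw [h1]
          _ = ⟪y, A (M y)⟫ := ContinuousLinearMap.adjoint_inner_left A (M y) y
      have h3 : ‖A (M y)‖^2 ≤ ‖y‖ * ‖A (M y)‖ := by
        rw [← real_inner_self_eq_norm_sq, h2]
        exact real_inner_le_norm y (A (M y))
      have h4 : ‖A (M y)‖ ≤ ‖y‖ := by
        rcases (norm_nonneg (A (M y))).eq_or_lt with hz | hz
        · rw [← hz]; exact norm_nonneg y
        · rw [pow_two] at h3
          exact le_of_mul_le_mul_right h3 hz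
      exact (hlb (M y)).trans h4
    have hgsa : ContinuousLinearMap.adjoint ((ContinuousLinearMap.adjoint A).comp A)
        = (ContinuousLinearMap.adjoint A).comp A := by
      rw [ContinuousLinearMap.adjoint_comp, ContinuousLinearMap.adjoint_adjoint]
    have hQsa : star Q = Q := by
      have h5 : star Q * ((ContinuousLinearMap.adjoint A).comp A) = 1 := by
        have := congrArg star hQg2
        rwa [star_mul, star_one,
          show star ((ContinuousLinearMap.adjoint A).comp A)
            = (ContinuousLinearMap.adjoint A).comp A from by
              rw [ContinuousLinearMap.star_eq_adjoint, hgsa]] at this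
      calc star Q = star Q * (((ContinuousLinearMap.adjoint A).comp A) * Q) := by
            rw [hQg2, mul_one]
        _ = (star Q * ((ContinuousLinearMap.adjoint A).comp A)) * Q := by rw [mul_assoc]
        _ = Q := by rw [h5, one_mul]
    have hQadj : ContinuousLinearMap.adjoint Q = Q := by
      rw [← ContinuousLinearMap.star_eq_adjoint, hQsa]
    have hMadj : ContinuousLinearMap.adjoint M = A.comp Q := by
      rw [hMdef, ContinuousLinearMap.adjoint_comp, ContinuousLinearMap.adjoint_adjoint, hQadj]
    have hMnorm : ‖M‖ ≤ 1 / lam := by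
      refine ContinuousLinearMap.opNorm_le_bound _ (by positivity) fun y => ?_
      have h := hMbd y
      rw [div_mul_eq_mul_div, le_div_iff₀ hlam, mul_comm, one_mul]
      exact h
    have hAQnorm : ‖A.comp Q‖ ≤ 1 / lam := by
      rw [← hMadj]
      calc ‖ContinuousLinearMap.adjoint M‖ = ‖M‖ :=
            LinearIsometryEquiv.norm_map ContinuousLinearMap.adjoint M
        _ ≤ 1 / lam := hMnorm
    have hBadjnorm : ‖ContinuousLinearMap.adjoint B‖ ≤ L * ‖v‖ := by
      calc ‖ContinuousLinearMap.adjoint B‖ = ‖B‖ :=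
            LinearIsometryEquiv.norm_map ContinuousLinearMap.adjoint B
        _ ≤ L * ‖v‖ := hBnorm
    have hMA : ∀ y, M (A y) = y := by
      intro y
      have h := hQgapp y
      simpa only [hMdef, ContinuousLinearMap.comp_apply] using h
    have hPsa : ContinuousLinearMap.adjoint (A.comp M) = A.comp M := by
      rw [ContinuousLinearMap.adjoint_comp, hMadj]
      ext x
      simp [hMdef, ContinuousLinearMap.comp_apply]
    have hcontr : ∀ x : H, ‖x - (A.comp M) x‖ ≤ ‖x‖ := by
      intro x
      rcases eq_or_ne (x - (A.comp M) x) 0 with h0 | h0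
      · rw [h0, norm_zero]; exact norm_nonneg x
      · have hidem' : (A.comp M) ((A.comp M) x) = (A.comp M) x := by
          simp only [ContinuousLinearMap.comp_apply]
          rw [hMA]
        have hy0 : (A.comp M) (x - (A.comp M) x) = 0 := by
          rw [map_sub, hidem', sub_self]
        have h6 : ⟪(A.comp M) x, x - (A.comp M) x⟫ = (0:ℝ) := by
          rw [← ContinuousLinearMap.adjoint_inner_right, hPsa, hy0, inner_zero_right]
        have h7 : ⟪x - (A.comp M) x, x - (A.comp M) x⟫ = ⟪x, x - (A.comp M) x⟫ := by
          rw [inner_sub_left, h6, sub_zero]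
        have h8 : ‖x - (A.comp M) x‖^2 ≤ ‖x‖ * ‖x - (A.comp M) x‖ := by
          rw [← real_inner_self_eq_norm_sq, h7]
          exact real_inner_le_norm _ _
        have h9 : 0 < ‖x - (A.comp M) x‖ := norm_pos_iff.mpr h0
        rw [pow_two] at h8
        exact le_of_mul_le_mul_right h8 h9
    have hT1 : ‖((1 : H →L[ℝ] H) - A.comp M).comp (B.comp M)‖ ≤ L * ‖v‖ * (1 / lam) := by
      refine ContinuousLinearMap.opNorm_le_bound _ (by positivity) fun x => ?_
      have e1 : (((1 : H →L[ℝ] H) - A.comp M).comp (B.comp M)) x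
          = B (M x) - (A.comp M) (B (M x)) := by
        simp [ContinuousLinearMap.comp_apply, ContinuousLinearMap.sub_apply]
      rw [e1]
      have h10 : ‖M x‖ ≤ (1 / lam) * ‖x‖ :=
        (M.le_opNorm x).trans (mul_le_mul_of_nonneg_right hMnorm (norm_nonneg x))
      calc ‖B (M x) - (A.comp M) (B (M x))‖ ≤ ‖B (M x)‖ := hcontr _
        _ ≤ ‖B‖ * ‖M x‖ := B.le_opNorm _
        _ ≤ (L * ‖v‖) * ((1 / lam) * ‖x‖) :=
            mul_le_mul hBnorm h10 (norm_nonneg _) hLv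
        _ = L * ‖v‖ * (1 / lam) * ‖x‖ := by ring
    have hT2 : ‖(A.comp (Q.comp (ContinuousLinearMap.adjoint B))).comp
        ((1 : H →L[ℝ] H) - A.comp M)‖ ≤ L * ‖v‖ * (1 / lam) := by
      refine ContinuousLinearMap.opNorm_le_bound _ (by positivity) fun x => ?_
      have e2 : ((A.comp (Q.comp (ContinuousLinearMap.adjoint B))).comp
          ((1 : H →L[ℝ] H) - A.comp M)) x
          = (A.comp Q) ((ContinuousLinearMap.adjoint B) (x - (A.comp M) x)) := by
        simp [ContinuousLinearMap.comp_apply, ContinuousLinearMap.sub_apply]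
      rw [e2]
      have h11 : ‖(ContinuousLinearMap.adjoint B) (x - (A.comp M) x)‖
          ≤ (L * ‖v‖) * ‖x‖ := by
        calc ‖(ContinuousLinearMap.adjoint B) (x - (A.comp M) x)‖
            ≤ ‖ContinuousLinearMap.adjoint B‖ * ‖x - (A.comp M) x‖ :=
              (ContinuousLinearMap.adjoint B).le_opNorm _
          _ ≤ (L * ‖v‖) * ‖x‖ :=
              mul_le_mul hBadjnorm (hcontr x) (norm_nonneg _) hLv
      calc ‖(A.comp Q) ((ContinuousLinearMap.adjoint B) (x - (A.comp M) x))‖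
          ≤ ‖A.comp Q‖ * ‖(ContinuousLinearMap.adjoint B) (x - (A.comp M) x)‖ :=
            (A.comp Q).le_opNorm _
        _ ≤ (1 / lam) * ((L * ‖v‖) * ‖x‖) :=
            mul_le_mul hAQnorm h11 (norm_nonneg _) (by positivity)
        _ = L * ‖v‖ * (1 / lam) * ‖x‖ := by ring
    calc ‖((1 : H →L[ℝ] H) - A.comp M).comp (B.comp M)
          + (A.comp (Q.comp (ContinuousLinearMap.adjoint B))).comp
              ((1 : H →L[ℝ] H) - A.comp M)‖
        ≤ ‖((1 : H →L[ℝ] H) - A.comp M).comp (B.comp M)‖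
          + ‖(A.comp (Q.comp (ContinuousLinearMap.adjoint B))).comp
              ((1 : H →L[ℝ] H) - A.comp M)‖ := norm_add_le _ _
      _ ≤ L * ‖v‖ * (1 / lam) + L * ‖v‖ * (1 / lam) := add_le_add hT1 hT2
      _ = 2 * L / lam * ‖v‖ := by field_simp; ring
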